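/- Suppose ρ ∈ M_2(ℂ)⊗M_2(ℂ) (a 4×4 complex matrix) is block-positive and at most one of its four diagonal entries is nonzero. Then every entry of ρ other than that diagonal entry is zero; in particular ρ has at most one nonzero entry, located on the diagonal. -/

import Mathlib

open Matrix ComplexOrder

noncomputable section

/-- The product (simple tensor) vector `ξ ⊗ η` in `ℂ^m ⊗ ℂ^n = ℂ^{m × n}`. -/
def prodVec {m n : ℕ} (ξ : Fin m → ℂ) (η : Fin n → ℂ) : Fin m × Fin n → ℂ :=
  fun p => ξ p.1 * η p.2

/-- A matrix `ρ ∈ M_m(ℂ) ⊗ M_n(ℂ)`, viewed as a matrix indexed by pairs via the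
lexicographically ordered product basis, is block-positive if
`⟨ξ ⊗ η | ρ | ξ ⊗ η⟩ ≥ 0` for all `ξ ∈ ℂ^m`, `η ∈ ℂ^n`. -/
def BlockPos {m n : ℕ} (ρ : Matrix (Fin m × Fin n) (Fin m × Fin n) ℂ) : Prop :=
  ∀ (ξ : Fin m → ℂ) (η : Fin n → ℂ),
    0 ≤ star (prodVec ξ η) ⬝ᵥ ρ *ᵥ prodVec ξ η

/-- The matrix `ρ_{a,b,α,β} ∈ M_2(ℂ) ⊗ M_2(ℂ)`, given in the lexicographically
ordered product basis by the rows `(a,0,0,α)`, `(0,0,β,0)`, `(0,β̄,0,0)`, `(ᾱ,0,0,b)`. -/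
def rhoMat (a b : ℝ) (α β : ℂ) : Matrix (Fin 2 × Fin 2) (Fin 2 × Fin 2) ℂ :=
  Matrix.of fun p q =>
    if p = ((0 : Fin 2), (0 : Fin 2)) ∧ q = ((0 : Fin 2), (0 : Fin 2)) then (a : ℂ)
    else if p = ((1 : Fin 2), (1 : Fin 2)) ∧ q = ((1 : Fin 2), (1 : Fin 2)) then (b : ℂ)
    else if p = ((0 : Fin 2), (0 : Fin 2)) ∧ q = ((1 : Fin 2), (1 : Fin 2)) then α
    else if p = ((1 : Fin 2), (1 : Fin 2)) ∧ q = ((0 : Fin 2), (0 : Fin 2)) then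
      (starRingEnd ℂ) α
    else if p = ((0 : Fin 2), (1 : Fin 2)) ∧ q = ((1 : Fin 2), (0 : Fin 2)) then β
    else if p = ((1 : Fin 2), (0 : Fin 2)) ∧ q = ((0 : Fin 2), (1 : Fin 2)) then
      (starRingEnd ℂ) β
    else 0

/-- If `c̄ u + c v + w ≥ 0` for every `c : ℂ`, then `u = v = 0`. -/
lemma keyC (u v w : ℂ) (h : ∀ c : ℂ, 0 ≤ (starRingEnd ℂ) c * u + c * v + w) :
    u = 0 ∧ v = 0 := by
  have hre : ∀ c : ℂ, 0 ≤ ((starRingEnd ℂ) c * u + c * v + w).re :=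
    fun c => (Complex.le_def.1 (h c)).1
  have him : ∀ c : ℂ, ((starRingEnd ℂ) c * u + c * v + w).im = 0 :=
    fun c => ((Complex.le_def.1 (h c)).2).symm
  have h0 := him 0
  have h1 := him 1
  have hI := him Complex.I
  simp [Complex.add_im, Complex.mul_im, Complex.conj_re, Complex.conj_im] at h0 h1 hI
  have hvre : v.re = u.re := by linarith
  have hvim : v.im = -u.im := by linarith
  have hu : u = 0 := by
    by_contra hu
    have hnsq : 0 < u.re * u.re + u.im * u.im := by
      have := Complex.normSq_pos.2 hu
      rwa [Complex.normSq_apply] at this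
    set s : ℝ := (w.re + 1) / (2 * (u.re * u.re + u.im * u.im)) with hs
    have hkey : s * (u.re * u.re + u.im * u.im) = (w.re + 1) / 2 := by
      rw [hs]; rw [div_mul_eq_mul_div, div_eq_div_iff (mul_pos two_pos hnsq).ne' (by norm_num)]; ring
    have H := hre (-(s : ℂ) * u)
    have hw := hre 0
    simp [Complex.add_re, Complex.mul_re, Complex.conj_re, Complex.conj_im,
      hvre, hvim] at H hw
    nlinarith [H, hw, hkey]
  refine ⟨hu, ?_⟩
  rw [hu] at hvre hvim
  apply Complex.ext <;> simp [hvre, hvim]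

/-- If `|K.re| * t ≤ d` for all `t ≥ 1` and `K.im = 0`, then `K = 0`. -/
lemma squeezeC (K : ℂ) (d : ℝ) (h : ∀ t : ℝ, 1 ≤ t → |K.re| * t ≤ d)
    (him : K.im = 0) : K = 0 := by
  have hre : K.re = 0 := by
    by_contra hK
    have habs : 0 < |K.re| := abs_pos.2 hK
    have ht : (1 : ℝ) ≤ max ((d + 1) / |K.re|) 1 := le_max_right _ _
    have H := h _ ht
    have : d + 1 ≤ |K.re| * max ((d + 1) / |K.re|) 1 := by
      calc d + 1 = |K.re| * ((d + 1) / |K.re|) := by field_simp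
        _ ≤ |K.re| * max ((d + 1) / |K.re|) 1 :=
          mul_le_mul_of_nonneg_left (le_max_left _ _) (le_of_lt habs)
    linarith
  exact Complex.ext hre him

/-- If the sesquilinear expression vanishes for all `u, v`, all four coefficients vanish. -/
lemma solveL (a1 a2 b1 b2 : ℂ)
    (h : ∀ u v : ℂ, a1 * u * v + a2 * (starRingEnd ℂ) u * (starRingEnd ℂ) v
      + b1 * u * (starRingEnd ℂ) v + b2 * (starRingEnd ℂ) u * v = 0) :
    a1 = 0 ∧ a2 = 0 ∧ b1 = 0 ∧ b2 = 0 := by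
  have h11 := h 1 1
  have h1i := h 1 Complex.I
  have hi1 := h Complex.I 1
  have hii := h Complex.I Complex.I
  simp [Complex.ext_iff, Complex.add_re, Complex.add_im, Complex.mul_re, Complex.mul_im,
    Complex.conj_re, Complex.conj_im, Complex.I_re, Complex.I_im] at h11 h1i hi1 hii
  obtain ⟨a, b⟩ := h11
  obtain ⟨c, d⟩ := h1i
  obtain ⟨e, f⟩ := hi1
  obtain ⟨g, i⟩ := hii
  refine ⟨?_, ?_, ?_, ?_⟩ <;> (apply Complex.ext <;> simp <;> linarith)

set_option maxHeartbeats 1000000 in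
/-- If a block-positive `ρ ∈ M_2(ℂ) ⊗ M_2(ℂ)` has at most one nonzero diagonal
entry (all diagonal entries other than the one at `p₀` vanish), then every entry of
`ρ` other than the `(p₀, p₀)` entry is zero. -/
theorem blockPos_at_most_one_diag (ρ : Matrix (Fin 2 × Fin 2) (Fin 2 × Fin 2) ℂ)
    (hρ : BlockPos ρ) (p₀ : Fin 2 × Fin 2) (hdiag : ∀ p, p ≠ p₀ → ρ p p = 0) :
    ∀ p q, ¬(p = p₀ ∧ q = p₀) → ρ p q = 0 := by
  -- Step 1: entries sharing a row or a column with a vanishing diagonal entry vanish.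
  have S1 : ∀ p q : Fin 2 × Fin 2, ρ p p = 0 → (p.1 = q.1 ∨ p.2 = q.2) → p ≠ q →
      ρ p q = 0 ∧ ρ q p = 0 := by
    intro p q hpp hline hpq
    apply keyC (ρ p q) (ρ q p) (ρ q q)
    intro c
    fin_cases p <;> fin_cases q <;>
      (try simp only [Fin.zero_eta, Fin.mk_one, Fin.isValue, Prod.mk_zero_zero,
        Prod.mk_one_one] at hpp) <;>
      (try simp only [Fin.zero_eta, Fin.mk_one, Fin.isValue, Prod.mk_zero_zero,
        Prod.mk_one_one] at hpq) <;>
      (try simp only [Fin.zero_eta, Fin.mk_one, Fin.isValue, Prod.mk_zero_zero,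
        Prod.mk_one_one] at hline) <;>
      (try simp only [Fin.zero_eta, Fin.mk_one, Fin.isValue, Prod.mk_zero_zero,
        Prod.mk_one_one]) <;>
      first
        | exact absurd rfl hpq
        | exact absurd hline (by decide)
          | (have H := hρ ![1,0] ![c,1];
             simp [dotProduct, mulVec, prodVec, Fintype.sum_prod_type, Fin.sum_univ_two,
               hpp, Prod.mk_zero_zero, Prod.mk_one_one] at H;
             convert H using 1 <;> ring1)
          | (have H := hρ ![1,0] ![1,c];
             simp [dotProduct, mulVec, prodVec, Fintype.sum_prod_type, Fin.sum_univ_two,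
               hpp, Prod.mk_zero_zero, Prod.mk_one_one] at H;
             convert H using 1 <;> ring1)
          | (have H := hρ ![0,1] ![c,1];
             simp [dotProduct, mulVec, prodVec, Fintype.sum_prod_type, Fin.sum_univ_two,
               hpp, Prod.mk_zero_zero, Prod.mk_one_one] at H;
             convert H using 1 <;> ring1)
          | (have H := hρ ![0,1] ![1,c];
             simp [dotProduct, mulVec, prodVec, Fintype.sum_prod_type, Fin.sum_univ_two,
               hpp, Prod.mk_zero_zero, Prod.mk_one_one] at H;
             convert H using 1 <;> ring1)
          | (have H := hρ ![c,1] ![1,0];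
             simp [dotProduct, mulVec, prodVec, Fintype.sum_prod_type, Fin.sum_univ_two,
               hpp, Prod.mk_zero_zero, Prod.mk_one_one] at H;
             convert H using 1 <;> ring1)
          | (have H := hρ ![1,c] ![1,0];
             simp [dotProduct, mulVec, prodVec, Fintype.sum_prod_type, Fin.sum_univ_two,
               hpp, Prod.mk_zero_zero, Prod.mk_one_one] at H;
             convert H using 1 <;> ring1)
          | (have H := hρ ![c,1] ![0,1];
             simp [dotProduct, mulVec, prodVec, Fintype.sum_prod_type, Fin.sum_univ_two,
               hpp, Prod.mk_zero_zero, Prod.mk_one_one] at H;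
             convert H using 1 <;> ring1)
          | (have H := hρ ![1,c] ![0,1];
             simp [dotProduct, mulVec, prodVec, Fintype.sum_prod_type, Fin.sum_univ_two,
               hpp, Prod.mk_zero_zero, Prod.mk_one_one] at H;
             convert H using 1 <;> ring1)
  have hline0 : ∀ p q : Fin 2 × Fin 2, (p.1 = q.1 ∨ p.2 = q.2) → p ≠ q → ρ p q = 0 := by
    intro p q hl hne
    by_cases hp : p = p₀
    · have hq : q ≠ p₀ := fun h => hne (by rw [hp, h])
      exact (S1 q p (hdiag q hq) (by tauto) (Ne.symm hne)).2
    · exact (S1 p q (hdiag p hp) hl hne).1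
  -- the eight "line" entries
  have z1 : ρ 0 ((0:Fin 2), (1:Fin 2)) = 0 := hline0 _ _ (Or.inl rfl) (by decide)
  have z2 : ρ 0 ((1:Fin 2), (0:Fin 2)) = 0 := hline0 _ _ (Or.inr rfl) (by decide)
  have z3 : ρ ((0:Fin 2), (1:Fin 2)) 0 = 0 := hline0 _ _ (Or.inl rfl) (by decide)
  have z4 : ρ ((0:Fin 2), (1:Fin 2)) 1 = 0 := hline0 _ _ (Or.inr rfl) (by decide)
  have z5 : ρ ((1:Fin 2), (0:Fin 2)) 0 = 0 := hline0 _ _ (Or.inr rfl) (by decide)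
  have z6 : ρ ((1:Fin 2), (0:Fin 2)) 1 = 0 := hline0 _ _ (Or.inl rfl) (by decide)
  have z7 : ρ 1 ((0:Fin 2), (1:Fin 2)) = 0 := hline0 _ _ (Or.inr rfl) (by decide)
  have z8 : ρ 1 ((1:Fin 2), (0:Fin 2)) = 0 := hline0 _ _ (Or.inl rfl) (by decide)
  -- the sesquilinear part
  set L : ℂ → ℂ → ℂ := fun u v =>
    ρ 0 1 * (u * v) + ρ 1 0 * ((starRingEnd ℂ) u * (starRingEnd ℂ) v)
      + ρ ((0:Fin 2), (1:Fin 2)) ((1:Fin 2), (0:Fin 2)) * (u * (starRingEnd ℂ) v)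
      + ρ ((1:Fin 2), (0:Fin 2)) ((0:Fin 2), (1:Fin 2)) * ((starRingEnd ℂ) u * v)
    with hL
  have hsu : ∀ (t : ℝ) (u v : ℂ), L ((t : ℂ) * u) v = (t : ℂ) * L u v := by
    intro t u v
    simp only [hL, _root_.map_mul, Complex.conj_ofReal]
    ring
  have hsv : ∀ (t : ℝ) (u v : ℂ), L u ((t : ℂ) * v) = (t : ℂ) * L u v := by
    intro t u v
    simp only [hL, _root_.map_mul, Complex.conj_ofReal]
    ring
  have hnu : ∀ u v : ℂ, L (-u) v = -L u v := by
    intro u v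
    simp only [hL, _root_.map_neg]
    ring
  have hnv : ∀ u v : ℂ, L u (-v) = -L u v := by
    intro u v
    simp only [hL, _root_.map_neg]
    ring
  -- the master inequality
  have hN : ∀ u v : ℂ,
      0 ≤ ρ 0 0 + ρ ((0:Fin 2), (1:Fin 2)) ((0:Fin 2), (1:Fin 2)) * ((starRingEnd ℂ) v * v)
        + ρ ((1:Fin 2), (0:Fin 2)) ((1:Fin 2), (0:Fin 2)) * ((starRingEnd ℂ) u * u)
        + ρ 1 1 * ((starRingEnd ℂ) u * u * ((starRingEnd ℂ) v * v))
        + L u v := by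
    intro u v
    have H := hρ ![1, u] ![1, v]
    simp only [dotProduct, mulVec, prodVec, Fintype.sum_prod_type, Fin.sum_univ_two,
      Matrix.cons_val_zero, Matrix.cons_val_one, Matrix.head_cons, Pi.star_apply,
      RCLike.star_def, _root_.map_one, _root_.map_mul, one_mul, mul_one,
      Prod.mk_zero_zero, Prod.mk_one_one, z1, z2, z3, z4, z5, z6, z7, z8,
      zero_mul, mul_zero, add_zero, zero_add] at H
    rw [hL]
    convert H using 1 <;> ring1
  -- Step 2: the four antidiagonal entries vanish.
  have hanti : ρ 0 1 = 0 ∧ ρ 1 0 = 0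
      ∧ ρ ((0:Fin 2), (1:Fin 2)) ((1:Fin 2), (0:Fin 2)) = 0
      ∧ ρ ((1:Fin 2), (0:Fin 2)) ((0:Fin 2), (1:Fin 2)) = 0 := by
    have hKey : ∀ u v : ℂ, L u v = 0 := by
      intro u v
      fin_cases p₀
      case _ => -- p₀ = (0,0)
        have d1 : ρ ((0:Fin 2), (1:Fin 2)) ((0:Fin 2), (1:Fin 2)) = 0 := hdiag _ (by decide)
        have d2 : ρ ((1:Fin 2), (0:Fin 2)) ((1:Fin 2), (0:Fin 2)) = 0 := hdiag _ (by decide)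
        have d3 : ρ 1 1 = 0 := hdiag _ (by decide)
        have hM : ∀ u v : ℂ, 0 ≤ ρ 0 0 + L u v := by
          intro u v
          have := hN u v
          simpa [d1, d2, d3] using this
        apply squeezeC _ ((ρ 0 0).re)
        · intro t ht
          have ht0 : (0 : ℝ) ≤ t := by linarith
          have h1 := hM ((t : ℂ) * u) v
          have h2 := hM ((t : ℂ) * (-u)) v
          rw [hsu] at h1
          rw [hsu, hnu] at h2
          have r1 := (Complex.le_def.1 h1).1
          have r2 := (Complex.le_def.1 h2).1
          simp only [Complex.add_re, Complex.zero_re, Complex.re_ofReal_mul,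
            Complex.neg_re] at r1 r2
          have habs : |(L u v).re * t| ≤ (ρ 0 0).re := by
            rw [abs_le]; constructor <;> nlinarith
          calc |(L u v).re| * t = |(L u v).re * t| := by
                rw [abs_mul, abs_of_nonneg ht0]
            _ ≤ (ρ 0 0).re := habs
        · have h1 := hM u v
          have h2 := hM (-u) v
          rw [hnu] at h2
          have i1 := (Complex.le_def.1 h1).2
          have i2 := (Complex.le_def.1 h2).2
          simp only [Complex.add_im, Complex.zero_im, Complex.neg_im] at i1 i2
          linarith
      case _ => -- p₀ = (0,1)
        have d1 : ρ 0 0 = 0 := hdiag _ (by decide)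
        have d2 : ρ ((1:Fin 2), (0:Fin 2)) ((1:Fin 2), (0:Fin 2)) = 0 := hdiag _ (by decide)
        have d3 : ρ 1 1 = 0 := hdiag _ (by decide)
        have hM : ∀ u v : ℂ,
            0 ≤ ρ ((0:Fin 2), (1:Fin 2)) ((0:Fin 2), (1:Fin 2)) * ((starRingEnd ℂ) v * v)
              + L u v := by
          intro u v
          have := hN u v
          simpa [d1, d2, d3] using this
        apply squeezeC _ ((ρ ((0:Fin 2), (1:Fin 2)) ((0:Fin 2), (1:Fin 2))
          * ((starRingEnd ℂ) v * v)).re)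
        · intro t ht
          have ht0 : (0 : ℝ) ≤ t := by linarith
          have h1 := hM ((t : ℂ) * u) v
          have h2 := hM ((t : ℂ) * (-u)) v
          rw [hsu] at h1
          rw [hsu, hnu] at h2
          have r1 := (Complex.le_def.1 h1).1
          have r2 := (Complex.le_def.1 h2).1
          simp only [Complex.add_re, Complex.zero_re, Complex.re_ofReal_mul,
            Complex.neg_re] at r1 r2
          have habs : |(L u v).re * t| ≤ (ρ ((0:Fin 2), (1:Fin 2)) ((0:Fin 2), (1:Fin 2))
              * ((starRingEnd ℂ) v * v)).re := by
            rw [abs_le]; constructor <;> nlinarith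
          calc |(L u v).re| * t = |(L u v).re * t| := by
                rw [abs_mul, abs_of_nonneg ht0]
            _ ≤ _ := habs
        · have h1 := hM u v
          have h2 := hM (-u) v
          rw [hnu] at h2
          have i1 := (Complex.le_def.1 h1).2
          have i2 := (Complex.le_def.1 h2).2
          simp only [Complex.add_im, Complex.zero_im, Complex.neg_im] at i1 i2
          linarith
      case _ => -- p₀ = (1,0)
        have d1 : ρ 0 0 = 0 := hdiag _ (by decide)
        have d2 : ρ ((0:Fin 2), (1:Fin 2)) ((0:Fin 2), (1:Fin 2)) = 0 := hdiag _ (by decide)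
        have d3 : ρ 1 1 = 0 := hdiag _ (by decide)
        have hM : ∀ u v : ℂ,
            0 ≤ ρ ((1:Fin 2), (0:Fin 2)) ((1:Fin 2), (0:Fin 2)) * ((starRingEnd ℂ) u * u)
              + L u v := by
          intro u v
          have := hN u v
          simpa [d1, d2, d3] using this
        apply squeezeC _ ((ρ ((1:Fin 2), (0:Fin 2)) ((1:Fin 2), (0:Fin 2))
          * ((starRingEnd ℂ) u * u)).re)
        · intro t ht
          have ht0 : (0 : ℝ) ≤ t := by linarith
          have h1 := hM u ((t : ℂ) * v)
          have h2 := hM u ((t : ℂ) * (-v))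
          rw [hsv] at h1
          rw [hsv, hnv] at h2
          have r1 := (Complex.le_def.1 h1).1
          have r2 := (Complex.le_def.1 h2).1
          simp only [Complex.add_re, Complex.zero_re, Complex.re_ofReal_mul,
            Complex.neg_re] at r1 r2
          have habs : |(L u v).re * t| ≤ (ρ ((1:Fin 2), (0:Fin 2)) ((1:Fin 2), (0:Fin 2))
              * ((starRingEnd ℂ) u * u)).re := by
            rw [abs_le]; constructor <;> nlinarith
          calc |(L u v).re| * t = |(L u v).re * t| := by
                rw [abs_mul, abs_of_nonneg ht0]
            _ ≤ _ := habs
        · have h1 := hM u v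
          have h2 := hM u (-v)
          rw [hnv] at h2
          have i1 := (Complex.le_def.1 h1).2
          have i2 := (Complex.le_def.1 h2).2
          simp only [Complex.add_im, Complex.zero_im, Complex.neg_im] at i1 i2
          linarith
      case _ => -- p₀ = (1,1)
        have d1 : ρ 0 0 = 0 := hdiag _ (by decide)
        have d2 : ρ ((0:Fin 2), (1:Fin 2)) ((0:Fin 2), (1:Fin 2)) = 0 := hdiag _ (by decide)
        have d3 : ρ ((1:Fin 2), (0:Fin 2)) ((1:Fin 2), (0:Fin 2)) = 0 := hdiag _ (by decide)
        have hM : ∀ u v : ℂ,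
            0 ≤ ρ 1 1 * ((starRingEnd ℂ) u * u * ((starRingEnd ℂ) v * v)) + L u v := by
          intro u v
          have := hN u v
          simpa [d1, d2, d3] using this
        apply squeezeC _ ((ρ 1 1 * ((starRingEnd ℂ) u * u * ((starRingEnd ℂ) v * v))).re)
        · intro t ht
          have ht0 : (0 : ℝ) < t := by linarith
          have htne : t ≠ 0 := ne_of_gt ht0
          have hti : t * t⁻¹ = 1 := mul_inv_cancel₀ htne
          have h1 := hM (((t⁻¹ : ℝ) : ℂ) * u) v
          have h2 := hM (((t⁻¹ : ℝ) : ℂ) * (-u)) v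
          have e1 : ρ 1 1 * ((starRingEnd ℂ) (((t⁻¹ : ℝ) : ℂ) * u) * ((((t⁻¹ : ℝ)) : ℂ) * u)
              * ((starRingEnd ℂ) v * v))
              = ((t⁻¹ * t⁻¹ : ℝ) : ℂ)
                * (ρ 1 1 * ((starRingEnd ℂ) u * u * ((starRingEnd ℂ) v * v))) := by
            simp only [_root_.map_mul, map_inv₀, Complex.conj_ofReal, Complex.ofReal_inv,
              Complex.ofReal_mul]
            ring
          have e2 : ρ 1 1 * ((starRingEnd ℂ) (((t⁻¹ : ℝ) : ℂ) * (-u))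
              * ((((t⁻¹ : ℝ)) : ℂ) * (-u)) * ((starRingEnd ℂ) v * v))
              = ((t⁻¹ * t⁻¹ : ℝ) : ℂ)
                * (ρ 1 1 * ((starRingEnd ℂ) u * u * ((starRingEnd ℂ) v * v))) := by
            simp only [_root_.map_mul, _root_.map_neg, map_inv₀, Complex.conj_ofReal,
              Complex.ofReal_inv, Complex.ofReal_mul]
            ring
          rw [e1, hsu] at h1
          rw [e2, hsu, hnu] at h2
          have r1 := (Complex.le_def.1 h1).1
          have r2 := (Complex.le_def.1 h2).1
          simp only [Complex.add_re, Complex.zero_re, Complex.re_ofReal_mul,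
            Complex.neg_re] at r1 r2
          have k1 : 0 ≤ (ρ 1 1 * ((starRingEnd ℂ) u * u * ((starRingEnd ℂ) v * v))).re
              + t * (L u v).re := by
            have h := mul_nonneg (mul_nonneg ht0.le ht0.le) r1
            have e : t * t * (t⁻¹ * t⁻¹
                  * (ρ 1 1 * ((starRingEnd ℂ) u * u * ((starRingEnd ℂ) v * v))).re
                + t⁻¹ * (L u v).re)
                = (ρ 1 1 * ((starRingEnd ℂ) u * u * ((starRingEnd ℂ) v * v))).re
                  + t * (L u v).re := by
              field_simp
            rwa [e] at h
          have k2 : 0 ≤ (ρ 1 1 * ((starRingEnd ℂ) u * u * ((starRingEnd ℂ) v * v))).re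
              + t * -(L u v).re := by
            have h := mul_nonneg (mul_nonneg ht0.le ht0.le) r2
            have e : t * t * (t⁻¹ * t⁻¹
                  * (ρ 1 1 * ((starRingEnd ℂ) u * u * ((starRingEnd ℂ) v * v))).re
                + t⁻¹ * -(L u v).re)
                = (ρ 1 1 * ((starRingEnd ℂ) u * u * ((starRingEnd ℂ) v * v))).re
                  + t * -(L u v).re := by
              field_simp
            rwa [e] at h
          have habs : |(L u v).re * t|
              ≤ (ρ 1 1 * ((starRingEnd ℂ) u * u * ((starRingEnd ℂ) v * v))).re := by
            rw [abs_le]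
            constructor <;> nlinarith [k1, k2]
          calc |(L u v).re| * t = |(L u v).re * t| := by
                rw [abs_mul, abs_of_nonneg (le_of_lt ht0)]
            _ ≤ _ := habs
        · have h1 := hM u v
          have h2 := hM (-u) v
          have e2 : ρ 1 1 * ((starRingEnd ℂ) (-u) * (-u) * ((starRingEnd ℂ) v * v))
              = ρ 1 1 * ((starRingEnd ℂ) u * u * ((starRingEnd ℂ) v * v)) := by
            rw [_root_.map_neg]; ring
          rw [e2, hnu] at h2
          have i1 := (Complex.le_def.1 h1).2
          have i2 := (Complex.le_def.1 h2).2
          simp only [Complex.add_im, Complex.zero_im, Complex.neg_im] at i1 i2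
          linarith
    simp only [hL] at hKey
    exact solveL _ _ _ _ (fun u v => by linear_combination hKey u v)
  obtain ⟨a1, a2, b1, b2⟩ := hanti
  intro p q hne
  by_cases hpq : p = q
  · subst hpq
    exact hdiag p (fun h => hne ⟨h, h⟩)
  · by_cases hl : p.1 = q.1 ∨ p.2 = q.2
    · exact hline0 p q hl hpq
    · fin_cases p <;> fin_cases q <;>
        (try simp only [Fin.zero_eta, Fin.mk_one, Fin.isValue, Prod.mk_zero_zero,
          Prod.mk_one_one]) <;>
        first
          | exact a1
          | exact a2
          | exact b1
          | exact b2
          | exact absurd (by decide) hl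


end
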